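/- For a natural number N, let P(N) be the (finite) set of pairs (μ, S) where μ is a multiset of positive even integers and S is a finite set of positive odd integers such that the sum of μ plus the sum of S equals N, and let d(N) be the cardinality of P(N). Then for every natural number N: ∑_{(μ,S)∈P(N)} (card μ + card S) = ∑_{(p,q)} d(N − pq), where the right-hand sum runs over all pairs of positive integers (p, q) with p ≡ q (mod 2) and pq ≤ N. (After doubling all parts and levels, this is the identity expressing that the degree in h of the level-n Kac determinant of the Neveu-Schwarz Verma module equals ∑_{0 < pq/2 ≤ n, p ≡ q (mod 2)} d(n − pq/2).) -/

import Mathlib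

open scoped BigOperators

/-- `P N` is the set of pairs `(μ, S)` where `μ` is a multiset of positive even
integers and `S` is a finite set of positive odd integers, with total sum `N`. -/
def NSPartitions (N : ℕ) : Set (Multiset ℕ × Finset ℕ) :=
  {x | (∀ i ∈ x.1, 0 < i ∧ Even i) ∧ (∀ i ∈ x.2, 0 < i ∧ Odd i) ∧
    x.1.sum + ∑ i ∈ x.2, i = N}

/-- `d N` is the number of such pairs: the dimension of the level-`N/2` subspace of the
Neveu-Schwarz Verma module (parts and levels doubled). -/
noncomputable def dNS (N : ℕ) : ℕ := (NSPartitions N).ncard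

lemma NSfinite (t : ℕ) : (NSPartitions t).Finite := by
  classical
  have hsub : NSPartitions t ⊆
      ↑((Finset.univ : Finset (Nat.Partition t)).image
        (fun p => (p.parts.filter (fun i => i % 2 = 0),
          (p.parts.filter (fun i => i % 2 = 1)).toFinset))) := by
    rintro ⟨μ, S⟩ ⟨h1, h2, h3⟩
    have hsum : (μ + S.val).sum = t := by
      rw [Multiset.sum_add]
      rw [show S.val.sum = ∑ i ∈ S, i by rw [show (∑ i ∈ S, i) = (S.val.map (fun i => i)).sum from rfl, Multiset.map_id']]
      exact h3
    have hpos : ∀ {i}, i ∈ μ + S.val → 0 < i := by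
      intro i hi
      rcases Multiset.mem_add.mp hi with h | h
      · exact (h1 i h).1
      · exact (h2 i h).1
    rw [Finset.coe_image, Set.mem_image]
    refine ⟨⟨μ + S.val, hpos, hsum⟩, by simp, ?_⟩
    have hμ : ∀ i ∈ μ, i % 2 = 0 := fun i hi => Nat.even_iff.mp (h1 i hi).2
    have hS : ∀ i ∈ S.val, i % 2 = 1 := fun i hi => Nat.odd_iff.mp (h2 i hi).2
    have e1 : (μ + S.val).filter (fun i => i % 2 = 0) = μ := by
      rw [Multiset.filter_add, Multiset.filter_eq_self.mpr hμ,
        Multiset.filter_eq_nil.mpr (fun i hi => by simp [hS i hi]), add_zero]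
    have e2 : (μ + S.val).filter (fun i => i % 2 = 1) = S.val := by
      rw [Multiset.filter_add, Multiset.filter_eq_self.mpr hS,
        Multiset.filter_eq_nil.mpr (fun i hi => by simp [hμ i hi]), zero_add]
    simp [e1, e2, Finset.val_toFinset]
  exact Set.Finite.subset (Finset.finite_toSet _) hsub

noncomputable def Pf (t : ℕ) : Finset (Multiset ℕ × Finset ℕ) := (NSfinite t).toFinset

lemma mem_Pf {t : ℕ} {x : Multiset ℕ × Finset ℕ} :
    x ∈ Pf t ↔ (∀ i ∈ x.1, 0 < i ∧ Even i) ∧ (∀ i ∈ x.2, 0 < i ∧ Odd i) ∧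
      x.1.sum + ∑ i ∈ x.2, i = t := (NSfinite t).mem_toFinset

lemma dNS_eq (t : ℕ) : dNS t = (Pf t).card :=
  Set.ncard_eq_toFinset_card _ (NSfinite t)

lemma sum_snd_eq {S : Finset ℕ} : ∑ i ∈ S, i = S.val.sum := by
  rw [show (∑ i ∈ S, i) = (S.val.map (fun i => i)).sum from rfl, Multiset.map_id']

lemma snd_le {t : ℕ} {x : Multiset ℕ × Finset ℕ} (hx : x ∈ Pf t) {k : ℕ} (hk : k ∈ x.2) :
    k ≤ t := by
  obtain ⟨h1, h2, h3⟩ := mem_Pf.mp hx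
  calc k ≤ ∑ i ∈ x.2, i := Finset.single_le_sum (fun i _ => Nat.zero_le i) hk
    _ ≤ t := by omega

noncomputable def Ak (t k : ℕ) : ℕ := ((Pf t).filter (fun x => k ∈ x.2)).card

lemma Ak_zero {t k : ℕ} (h : t < k) : Ak t k = 0 := by
  rw [Ak, Finset.card_eq_zero, Finset.filter_eq_empty_iff]
  intro x hx hk
  exact absurd (snd_le hx hk) (by omega)

lemma Ak_rec {t k : ℕ} (hko : Odd k) (hkt : k ≤ t) :
    Ak t k + Ak (t - k) k = dNS (t - k) := by
  classical
  have hk : 0 < k := hko.pos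
  have key : Ak t k = ((Pf (t - k)).filter (fun y => k ∉ y.2)).card := by
    apply Finset.card_nbij' (i := fun x => (x.1, x.2.erase k))
      (j := fun y => (y.1, insert k y.2))
    · intro x hx
      rw [Finset.mem_coe, Finset.mem_filter] at hx ⊢
      obtain ⟨hx, hkx⟩ := hx
      obtain ⟨h1, h2, h3⟩ := mem_Pf.mp hx
      have hs : k + ∑ i ∈ x.2.erase k, i = ∑ i ∈ x.2, i := Finset.add_sum_erase _ (fun i => i) hkx
      refine ⟨mem_Pf.mpr ⟨h1, fun i hi => h2 i (Finset.mem_of_mem_erase hi), by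
        simp only; omega⟩, by simp⟩
    · intro y hy
      rw [Finset.mem_coe, Finset.mem_filter] at hy ⊢
      obtain ⟨hy, hky⟩ := hy
      obtain ⟨h1, h2, h3⟩ := mem_Pf.mp hy
      have hs : ∑ i ∈ insert k y.2, i = k + ∑ i ∈ y.2, i := Finset.sum_insert hky
      refine ⟨mem_Pf.mpr ⟨h1, fun i hi => ?_, by simp only; omega⟩, by simp⟩
      rcases Finset.mem_insert.mp hi with rfl | hi
      · exact ⟨hk, hko⟩
      · exact h2 i hi
    · intro x hx
      rw [Finset.mem_coe, Finset.mem_filter] at hx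
      exact Prod.ext rfl (Finset.insert_erase hx.2)
    · intro y hy
      rw [Finset.mem_coe, Finset.mem_filter] at hy
      exact Prod.ext rfl (Finset.erase_insert hy.2)
  rw [key, dNS_eq, Ak, Nat.add_comm]
  exact Finset.card_filter_add_card_filter_not _

lemma Ak_even {t k : ℕ} (h : Even k) : Ak t k = 0 := by
  rw [Ak, Finset.card_eq_zero, Finset.filter_eq_empty_iff]
  intro x hx hk
  obtain ⟨h1, h2, h3⟩ := mem_Pf.mp hx
  exact (Nat.not_even_iff_odd.mpr (h2 k hk).2) h

lemma fst_le {t : ℕ} {x : Multiset ℕ × Finset ℕ} (hx : x ∈ Pf t) {i : ℕ} (hi : i ∈ x.1) :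
    i ≤ t := by
  obtain ⟨h1, h2, h3⟩ := mem_Pf.mp hx
  calc i ≤ x.1.sum := Multiset.le_sum_of_mem hi
    _ ≤ t := by omega

lemma count_mul_le {t : ℕ} {x : Multiset ℕ × Finset ℕ} (hx : x ∈ Pf t) (k j : ℕ)
    (hj : j ≤ x.1.count k) : k * j ≤ t := by
  obtain ⟨h1, h2, h3⟩ := mem_Pf.mp hx
  have hrep : Multiset.replicate j k ≤ x.1 := Multiset.le_count_iff_replicate_le.mp hj
  have hdec : (x.1 - Multiset.replicate j k) + Multiset.replicate j k = x.1 :=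
    tsub_add_cancel_of_le hrep
  have hsum : (x.1 - Multiset.replicate j k).sum + j * k = x.1.sum := by
    conv_rhs => rw [← hdec]
    rw [Multiset.sum_add, Multiset.sum_replicate, smul_eq_mul]
  have := Nat.mul_comm k j
  omega

lemma B1 {t k j : ℕ} (hke : Even k) (hk : 0 < k) (hjt : k * j ≤ t) :
    ((Pf t).filter (fun x => j ≤ x.1.count k)).card = dNS (t - k * j) := by
  classical
  rw [dNS_eq]
  apply Finset.card_nbij' (i := fun x => (x.1 - Multiset.replicate j k, x.2))
    (j := fun y => (y.1 + Multiset.replicate j k, y.2))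
  · intro x hx
    rw [Finset.mem_coe, Finset.mem_filter] at hx
    obtain ⟨hx, hcnt⟩ := hx
    obtain ⟨h1, h2, h3⟩ := mem_Pf.mp hx
    have hrep : Multiset.replicate j k ≤ x.1 := Multiset.le_count_iff_replicate_le.mp hcnt
    have hdec : (x.1 - Multiset.replicate j k) + Multiset.replicate j k = x.1 :=
      tsub_add_cancel_of_le hrep
    have hsum : (x.1 - Multiset.replicate j k).sum + k * j = x.1.sum := by
      conv_rhs => rw [← hdec]
      rw [Multiset.sum_add, Multiset.sum_replicate, smul_eq_mul, Nat.mul_comm]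
    refine mem_Pf.mpr ⟨fun i hi => h1 i (Multiset.mem_of_le tsub_le_self hi), h2, ?_⟩
    simp only; omega
  · intro y hy
    obtain ⟨h1, h2, h3⟩ := mem_Pf.mp hy
    have hsum : (y.1 + Multiset.replicate j k).sum = y.1.sum + k * j := by
      rw [Multiset.sum_add, Multiset.sum_replicate, smul_eq_mul, Nat.mul_comm]
    rw [Finset.mem_coe, Finset.mem_filter]
    refine ⟨mem_Pf.mpr ⟨fun i hi => ?_, h2, by simp only [hsum]; omega⟩, ?_⟩
    · rcases Multiset.mem_add.mp hi with h | h
      · exact h1 i h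
      · rw [Multiset.eq_of_mem_replicate h]; exact ⟨hk, hke⟩
    · simp only [Multiset.count_add, Multiset.count_replicate_self]
      omega
  · intro x hx
    rw [Finset.mem_coe, Finset.mem_filter] at hx
    have hrep : Multiset.replicate j k ≤ x.1 :=
      Multiset.le_count_iff_replicate_le.mp hx.2
    exact Prod.ext (tsub_add_cancel_of_le hrep) rfl
  · intro y _
    exact Prod.ext (add_tsub_cancel_right _ _) rfl

lemma B1' {t k j : ℕ} (hjt : t < k * j) :
    ((Pf t).filter (fun x => j ≤ x.1.count k)).card = 0 := by
  rw [Finset.card_eq_zero, Finset.filter_eq_empty_iff]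
  intro x hx hc
  exact absurd (count_mul_le hx k j hc) (by omega)

noncomputable def Tk (t r k : ℕ) : ℕ :=
  ∑ j ∈ (Finset.Icc 1 t).filter (fun j => j % 2 = r ∧ k * j ≤ t), dNS (t - k * j)

lemma Bsum {t k : ℕ} (hke : Even k) (hk : 0 < k) :
    ∑ x ∈ Pf t, x.1.count k = Tk t 0 k + Tk t 1 k := by
  classical
  have step1 : ∀ x ∈ Pf t, x.1.count k =
      ∑ j ∈ Finset.Icc 1 t, (if j ≤ x.1.count k then 1 else 0) := by
    intro x hx
    have hct : x.1.count k ≤ t := by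
      have := count_mul_le hx k (x.1.count k) le_rfl
      have := Nat.le_mul_of_pos_left (x.1.count k) hk
      omega
    rw [← Finset.card_filter]
    have : (Finset.Icc 1 t).filter (fun j => j ≤ x.1.count k) =
        Finset.Icc 1 (x.1.count k) := by
      ext j
      simp only [Finset.mem_filter, Finset.mem_Icc]
      omega
    rw [this, Nat.card_Icc]
    omega
  calc ∑ x ∈ Pf t, x.1.count k
      = ∑ x ∈ Pf t, ∑ j ∈ Finset.Icc 1 t, (if j ≤ x.1.count k then 1 else 0) :=
        Finset.sum_congr rfl step1
    _ = ∑ j ∈ Finset.Icc 1 t, ∑ x ∈ Pf t, (if j ≤ x.1.count k then 1 else 0) :=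
        Finset.sum_comm
    _ = ∑ j ∈ Finset.Icc 1 t, ((Pf t).filter (fun x => j ≤ x.1.count k)).card := by
        refine Finset.sum_congr rfl fun j _ => ?_
        rw [Finset.card_filter]
    _ = ∑ j ∈ Finset.Icc 1 t, ((if j % 2 = 0 ∧ k * j ≤ t then dNS (t - k * j) else 0)
          + (if j % 2 = 1 ∧ k * j ≤ t then dNS (t - k * j) else 0)) := by
        refine Finset.sum_congr rfl fun j _ => ?_
        rcases Nat.mod_two_eq_zero_or_one j with h2 | h2
        · by_cases h3 : k * j ≤ t
          · rw [B1 hke hk h3]; simp [h2, h3]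
          · rw [B1' (by omega)]; simp [h3]
        · by_cases h3 : k * j ≤ t
          · rw [B1 hke hk h3]; simp [h2, h3]
          · rw [B1' (by omega)]; simp [h3]
    _ = Tk t 0 k + Tk t 1 k := by
        rw [Finset.sum_add_distrib, Tk, Tk, Finset.sum_filter, Finset.sum_filter]

lemma Tk_zero {t r k : ℕ} (h : t < k) : Tk t r k = 0 := by
  rw [Tk, Finset.sum_eq_zero]
  intro j hj
  rw [Finset.mem_filter, Finset.mem_Icc] at hj
  have : k ≤ k * j := Nat.le_mul_of_pos_right k (by omega)
  omega

lemma Tk_shift0 {t k : ℕ} (hk : 0 < k) (hkt : k ≤ t) : Tk t 0 k = Tk (t - k) 1 k := by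
  apply Finset.sum_nbij' (i := fun j => j - 1) (j := fun j => j + 1)
  · intro j hj
    rw [Finset.mem_filter, Finset.mem_Icc] at hj ⊢
    obtain ⟨⟨hj1, hj2⟩, hj3, hj4⟩ := hj
    have h2 : 2 ≤ j := by omega
    have harith : k * (j - 1) + k = k * j := by
      conv_rhs => rw [show j = (j - 1) + 1 by omega]
      ring
    have hle : j - 1 ≤ k * (j - 1) := Nat.le_mul_of_pos_left _ hk
    refine ⟨⟨by omega, by omega⟩, by omega, by omega⟩
  · intro j hj
    rw [Finset.mem_filter, Finset.mem_Icc] at hj ⊢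
    obtain ⟨⟨hj1, hj2⟩, hj3, hj4⟩ := hj
    have harith : k * (j + 1) = k * j + k := by ring
    have hle : j + 1 ≤ k * (j + 1) := Nat.le_mul_of_pos_left _ hk
    refine ⟨⟨by omega, by omega⟩, by omega, by omega⟩
  · intro j hj
    rw [Finset.mem_filter, Finset.mem_Icc] at hj
    omega
  · intro j hj
    omega
  · intro j hj
    rw [Finset.mem_filter, Finset.mem_Icc] at hj
    obtain ⟨⟨hj1, hj2⟩, hj3, hj4⟩ := hj
    have harith : k * (j - 1) + k = k * j := by
      conv_rhs => rw [show j = (j - 1) + 1 by omega]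
      ring
    congr 1
    omega

lemma Tk_shift1 {t k : ℕ} (hk : 0 < k) (hkt : k ≤ t) :
    Tk t 1 k = dNS (t - k) + Tk (t - k) 0 k := by
  classical
  have h1mem : 1 ∈ (Finset.Icc 1 t).filter (fun j => j % 2 = 1 ∧ k * j ≤ t) := by
    rw [Finset.mem_filter, Finset.mem_Icc]
    refine ⟨⟨le_rfl, by omega⟩, by omega, by omega⟩
  rw [Tk, ← Finset.add_sum_erase _ _ h1mem, Nat.mul_one]
  congr 1
  apply Finset.sum_nbij' (i := fun j => j - 1) (j := fun j => j + 1)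
  · intro j hj
    rw [Finset.mem_erase, Finset.mem_filter, Finset.mem_Icc] at hj
    obtain ⟨hne, ⟨hj1, hj2⟩, hj3, hj4⟩ := hj
    have h3 : 3 ≤ j := by omega
    have harith : k * (j - 1) + k = k * j := by
      conv_rhs => rw [show j = (j - 1) + 1 by omega]
      ring
    have hle : j - 1 ≤ k * (j - 1) := Nat.le_mul_of_pos_left _ hk
    rw [Finset.mem_filter, Finset.mem_Icc]
    refine ⟨⟨by omega, by omega⟩, by omega, by omega⟩
  · intro j hj
    rw [Finset.mem_filter, Finset.mem_Icc] at hj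
    obtain ⟨⟨hj1, hj2⟩, hj3, hj4⟩ := hj
    have harith : k * (j + 1) = k * j + k := by ring
    have hle : j + 1 ≤ k * (j + 1) := Nat.le_mul_of_pos_left _ hk
    rw [Finset.mem_erase, Finset.mem_filter, Finset.mem_Icc]
    refine ⟨by omega, ⟨by omega, by omega⟩, by omega, by omega⟩
  · intro j hj
    rw [Finset.mem_erase, Finset.mem_filter, Finset.mem_Icc] at hj
    omega
  · intro j hj
    omega
  · intro j hj
    rw [Finset.mem_erase, Finset.mem_filter, Finset.mem_Icc] at hj
    obtain ⟨hne, ⟨hj1, hj2⟩, hj3, hj4⟩ := hj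
    have harith : k * (j - 1) + k = k * j := by
      conv_rhs => rw [show j = (j - 1) + 1 by omega]
      ring
    congr 1
    omega

lemma main_odd {k : ℕ} (hko : Odd k) : ∀ t, Ak t k + Tk t 0 k = Tk t 1 k := by
  intro t
  induction t using Nat.strong_induction_on with
  | _ t IH =>
    have hk : 0 < k := hko.pos
    by_cases hkt : k ≤ t
    · have ht' : t - k < t := by omega
      have hIH := IH (t - k) ht'
      have hrec := Ak_rec hko hkt
      rw [Tk_shift0 hk hkt, Tk_shift1 hk hkt]
      omega
    · rw [Ak_zero (by omega), Tk_zero (by omega), Tk_zero (by omega)]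

lemma pairTk {N : ℕ} (r1 r2 : ℕ) :
    ∑ x ∈ (Finset.Icc 1 N ×ˢ Finset.Icc 1 N).filter
        (fun x => x.1 % 2 = r1 ∧ x.2 % 2 = r2 ∧ x.1 * x.2 ≤ N),
      dNS (N - x.1 * x.2)
    = ∑ k ∈ (Finset.Icc 1 N).filter (fun k => k % 2 = r1), Tk N r2 k := by
  classical
  rw [show (∑ k ∈ (Finset.Icc 1 N).filter (fun k => k % 2 = r1), Tk N r2 k) =
    ∑ k ∈ (Finset.Icc 1 N).filter (fun k => k % 2 = r1),
      ∑ j ∈ (Finset.Icc 1 N).filter (fun j => j % 2 = r2 ∧ k * j ≤ N),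
        dNS (N - k * j) from rfl]
  refine Finset.sum_finset_product' (f := fun k j => dNS (N - k * j)) _ _ _ fun p => ?_
  simp only [Finset.mem_filter, Finset.mem_product]
  tauto

lemma swapT (N : ℕ) :
    ∑ k ∈ (Finset.Icc 1 N).filter (fun k => k % 2 = 0), Tk N 1 k
      = ∑ k ∈ (Finset.Icc 1 N).filter (fun k => k % 2 = 1), Tk N 0 k := by
  classical
  rw [← pairTk 0 1, ← pairTk 1 0]
  apply Finset.sum_nbij' (i := Prod.swap) (j := Prod.swap)
  · intro x hx
    rw [Finset.mem_filter, Finset.mem_product] at hx ⊢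
    refine ⟨⟨hx.1.2, hx.1.1⟩, hx.2.2.1, hx.2.1, by rw [Nat.mul_comm]; exact hx.2.2.2⟩
  · intro x hx
    rw [Finset.mem_filter, Finset.mem_product] at hx ⊢
    refine ⟨⟨hx.1.2, hx.1.1⟩, hx.2.2.1, hx.2.1, by rw [Nat.mul_comm]; exact hx.2.2.2⟩
  · intro x _; rfl
  · intro x _; rfl
  · intro x _
    simp [Nat.mul_comm]

lemma LHS1 (N : ℕ) : ∑ x ∈ Pf N, Multiset.card x.1
    = ∑ k ∈ (Finset.Icc 1 N).filter (fun k => k % 2 = 0), (Tk N 0 k + Tk N 1 k) := by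
  classical
  have hcard : ∀ x ∈ Pf N, Multiset.card x.1 = ∑ k ∈ Finset.Icc 1 N, x.1.count k := by
    intro x hx
    obtain ⟨h1, h2, h3⟩ := mem_Pf.mp hx
    rw [← Multiset.toFinset_sum_count_eq]
    apply Finset.sum_subset
    · intro k hk
      rw [Multiset.mem_toFinset] at hk
      rw [Finset.mem_Icc]
      exact ⟨(h1 k hk).1, fst_le hx hk⟩
    · intro k _ hk
      exact Multiset.count_eq_zero.mpr (fun h => hk (Multiset.mem_toFinset.mpr h))
  calc ∑ x ∈ Pf N, Multiset.card x.1
      = ∑ x ∈ Pf N, ∑ k ∈ Finset.Icc 1 N, x.1.count k := Finset.sum_congr rfl hcard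
    _ = ∑ k ∈ Finset.Icc 1 N, ∑ x ∈ Pf N, x.1.count k := Finset.sum_comm
    _ = ∑ k ∈ Finset.Icc 1 N, (if k % 2 = 0 then Tk N 0 k + Tk N 1 k else 0) := by
        refine Finset.sum_congr rfl fun k hk => ?_
        rw [Finset.mem_Icc] at hk
        by_cases h2 : k % 2 = 0
        · rw [if_pos h2]
          exact Bsum (Nat.even_iff.mpr h2) (by omega)
        · rw [if_neg h2]
          apply Finset.sum_eq_zero
          intro x hx
          obtain ⟨h1', _, _⟩ := mem_Pf.mp hx
          refine Multiset.count_eq_zero.mpr fun hmem => ?_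
          have := Nat.even_iff.mp (h1' k hmem).2
          omega
    _ = _ := by rw [← Finset.sum_filter]

lemma LHS2 (N : ℕ) : ∑ x ∈ Pf N, x.2.card
    = ∑ k ∈ (Finset.Icc 1 N).filter (fun k => k % 2 = 1), Ak N k := by
  classical
  have hcard : ∀ x ∈ Pf N, x.2.card
      = ∑ k ∈ Finset.Icc 1 N, (if k ∈ x.2 then 1 else 0) := by
    intro x hx
    obtain ⟨h1, h2, h3⟩ := mem_Pf.mp hx
    rw [← Finset.card_filter]
    congr 1
    ext k
    simp only [Finset.mem_filter, Finset.mem_Icc, iff_and_self, and_imp]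
    intro hk
    exact ⟨(h2 k hk).1, snd_le hx hk⟩
  calc ∑ x ∈ Pf N, x.2.card
      = ∑ x ∈ Pf N, ∑ k ∈ Finset.Icc 1 N, (if k ∈ x.2 then 1 else 0) :=
        Finset.sum_congr rfl hcard
    _ = ∑ k ∈ Finset.Icc 1 N, ∑ x ∈ Pf N, (if k ∈ x.2 then 1 else 0) := Finset.sum_comm
    _ = ∑ k ∈ Finset.Icc 1 N, (if k % 2 = 1 then Ak N k else 0) := by
        refine Finset.sum_congr rfl fun k hk => ?_
        rw [← Finset.card_filter, ← Ak]
        by_cases h2 : k % 2 = 1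
        · rw [if_pos h2]
        · rw [if_neg h2, Ak_even (Nat.even_iff.mpr (by omega))]
    _ = _ := by rw [← Finset.sum_filter]

lemma RHSsplit (N : ℕ) :
    ∑ x ∈ (Finset.Icc 1 N ×ˢ Finset.Icc 1 N).filter
        (fun pq => pq.1 % 2 = pq.2 % 2 ∧ pq.1 * pq.2 ≤ N), dNS (N - x.1 * x.2)
    = ∑ k ∈ (Finset.Icc 1 N).filter (fun k => k % 2 = 0), Tk N 0 k
      + ∑ k ∈ (Finset.Icc 1 N).filter (fun k => k % 2 = 1), Tk N 1 k := by
  classical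
  rw [← pairTk 0 0, ← pairTk 1 1]
  rw [← Finset.sum_filter_add_sum_filter_not
    ((Finset.Icc 1 N ×ˢ Finset.Icc 1 N).filter
      (fun pq => pq.1 % 2 = pq.2 % 2 ∧ pq.1 * pq.2 ≤ N)) (fun x => x.1 % 2 = 0)]
  congr 1
  · congr 1
    ext x
    simp only [Finset.mem_filter, Finset.mem_product]
    constructor
    · rintro ⟨⟨hm, hpar, hmul⟩, h0⟩
      exact ⟨hm, h0, by omega, hmul⟩
    · rintro ⟨hm, h0, h1, hmul⟩
      exact ⟨⟨hm, by omega, hmul⟩, h0⟩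
  · congr 1
    ext x
    simp only [Finset.mem_filter, Finset.mem_product]
    constructor
    · rintro ⟨⟨hm, hpar, hmul⟩, h0⟩
      exact ⟨hm, by omega, by omega, hmul⟩
    · rintro ⟨hm, h0, h1, hmul⟩
      exact ⟨⟨hm, by omega, hmul⟩, by omega⟩


/-- Degree identity -/
theorem kac_determinant_degree (N : ℕ) :
    (∑ᶠ x ∈ NSPartitions N, (Multiset.card x.1 + x.2.card)) =
      ∑ x ∈ (Finset.Icc 1 N ×ˢ Finset.Icc 1 N).filter
          (fun pq => pq.1 % 2 = pq.2 % 2 ∧ pq.1 * pq.2 ≤ N),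
        dNS (N - x.1 * x.2) := by
  classical
  rw [finsum_mem_eq_finite_toFinset_sum _ (NSfinite N)]
  show ∑ x ∈ Pf N, (Multiset.card x.1 + x.2.card) = _
  rw [Finset.sum_add_distrib, LHS1, LHS2, RHSsplit, Finset.sum_add_distrib]
  have hswap := swapT N
  have hodd : ∑ k ∈ (Finset.Icc 1 N).filter (fun k => k % 2 = 1), Ak N k
      + ∑ k ∈ (Finset.Icc 1 N).filter (fun k => k % 2 = 1), Tk N 0 k
      = ∑ k ∈ (Finset.Icc 1 N).filter (fun k => k % 2 = 1), Tk N 1 k := by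
    rw [← Finset.sum_add_distrib]
    refine Finset.sum_congr rfl fun k hk => ?_
    rw [Finset.mem_filter] at hk
    exact main_odd (Nat.odd_iff.mpr hk.2) N
  omega
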